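/- Let q ∈ R be nonzero and suppose that every ideal J of R with card(R/J) = card(R/qR) equals qR (i.e., qR is the unique ideal of its index, so there is exactly one ideal colouring of R with ℓ = card(R/qR) colours). Then conj(q) ∈ qR, and hence the colouring induced by qR is perfect. -/

import Mathlib

open Complex

/-- The primitive `n`-th root of unity `ζ = exp(2πi/n)`. -/
noncomputable def zeta (n : ℕ) : ℂ := Complex.exp (2 * Real.pi * Complex.I / n)

/-- The ring of cyclotomic integers `M_n = ℤ[ζ_n]`, as a subring of `ℂ`. -/
noncomputable def Rn (n : ℕ) : Subring ℂ := Subring.closure {zeta n}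

/-- `ζ_n` as an element of `M_n`. -/
noncomputable def zetaR (n : ℕ) : ↥(Rn n) := ⟨zeta n, Subring.subset_closure rfl⟩

/-- `z ∈ ℂ` lies in the ideal `I` of `Rn n` (viewed inside `ℂ`). -/
def InIdeal (n : ℕ) (I : Ideal ↥(Rn n)) (z : ℂ) : Prop :=
  ∃ w : ↥(Rn n), w ∈ I ∧ (w : ℂ) = z

/-- An isometry of the complex plane: `z ↦ a z + b` or `z ↦ a conj z + b` with `|a| = 1`. -/
def IsIsometry (g : ℂ → ℂ) : Prop :=
  ∃ a b : ℂ, ‖a‖ = 1 ∧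
    ((∀ z, g z = a * z + b) ∨ (∀ z, g z = a * (starRingEnd ℂ) z + b))

/-- An orientation-preserving isometry of the complex plane: `z ↦ a z + b` with `|a| = 1`. -/
def IsOPIsometry (g : ℂ → ℂ) : Prop :=
  ∃ a b : ℂ, ‖a‖ = 1 ∧ ∀ z, g z = a * z + b

/-- `g` is a colour symmetry of the colouring of `Rn n` induced by the ideal `I`. -/
def IsColourSym (n : ℕ) (I : Ideal ↥(Rn n)) (g : ℂ → ℂ) : Prop :=
  ∀ x y : ℂ, x ∈ Rn n → y ∈ Rn n → (InIdeal n I (x - y) ↔ InIdeal n I (g x - g y))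

/-- The colouring induced by `I` is perfect. -/
def IsPerfectColouring (n : ℕ) (I : Ideal ↥(Rn n)) : Prop :=
  ∀ g : ℂ → ℂ, IsIsometry g → g '' (Rn n : Set ℂ) = (Rn n : Set ℂ) → IsColourSym n I g

/-- The colouring induced by `I` is chirally perfect. -/
def IsChirallyPerfectColouring (n : ℕ) (I : Ideal ↥(Rn n)) : Prop :=
  ∀ g : ℂ → ℂ, IsOPIsometry g → g '' (Rn n : Set ℂ) = (Rn n : Set ℂ) → IsColourSym n I g


set_option maxHeartbeats 1000000 in
lemma zeta_pow_n (n : ℕ) (hn : n ≠ 0) : zeta n ^ n = 1 := by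
  rw [zeta, ← Complex.exp_nat_mul]
  have h : (n : ℂ) ≠ 0 := Nat.cast_ne_zero.mpr hn
  rw [mul_comm, div_mul_cancel₀ _ h]
  exact Complex.exp_two_pi_mul_I

lemma zeta_ne_zero (n : ℕ) : zeta n ≠ 0 := Complex.exp_ne_zero _

lemma conj_zeta (n : ℕ) (hn : 3 ≤ n) :
    (starRingEnd ℂ) (zeta n) = zeta n ^ (n - 1) := by
  have hn0 : n ≠ 0 := by omega
  have h1 : zeta n ^ (n - 1) * zeta n = 1 := by
    rw [← pow_succ, Nat.sub_add_cancel (by omega)]; exact zeta_pow_n n hn0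
  have h2 : (starRingEnd ℂ) (zeta n) * zeta n = 1 := by
    rw [zeta, ← Complex.exp_conj, ← Complex.exp_add]
    have h3 : (starRingEnd ℂ) (2 * ↑Real.pi * Complex.I / ↑n)
        + 2 * ↑Real.pi * Complex.I / ↑n = 0 := by
      simp only [map_div₀, map_mul, Complex.conj_I, Complex.conj_ofReal, map_ofNat,
        map_natCast]
      ring
    rw [h3, Complex.exp_zero]
  exact mul_right_cancel₀ (zeta_ne_zero n) (h2.trans h1.symm)

lemma conj_mem (n : ℕ) (hn : 3 ≤ n) {z : ℂ} (hz : z ∈ Rn n) :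
    (starRingEnd ℂ) z ∈ Rn n := by
  induction hz using Subring.closure_induction with
  | mem x hx =>
    rw [Set.mem_singleton_iff] at hx
    subst hx
    rw [conj_zeta n hn]
    have h : zeta n ∈ Rn n := Subring.subset_closure rfl
    exact pow_mem h (n - 1)
  | zero => rw [map_zero]; exact zero_mem _
  | one => rw [map_one]; exact one_mem _
  | add x y _ _ hx hy => rw [map_add]; exact add_mem hx hy
  | neg x _ hx => rw [map_neg]; exact neg_mem hx
  | mul x y _ _ hx hy => rw [map_mul]; exact mul_mem hx hy

/-- Complex conjugation as a ring automorphism of `Rn n`. -/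
noncomputable def sigmaE (n : ℕ) (hn : 3 ≤ n) : ↥(Rn n) ≃+* ↥(Rn n) where
  toFun x := ⟨(starRingEnd ℂ) (x : ℂ), conj_mem n hn x.2⟩
  invFun x := ⟨(starRingEnd ℂ) (x : ℂ), conj_mem n hn x.2⟩
  left_inv x := by ext; exact Complex.conj_conj _
  right_inv x := by ext; exact Complex.conj_conj _
  map_mul' x y := by ext; exact map_mul (starRingEnd ℂ) _ _
  map_add' x y := by ext; exact map_add (starRingEnd ℂ) _ _

@[simp] lemma sigmaE_coe (n : ℕ) (hn : 3 ≤ n) (x : ↥(Rn n)) :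
    ((sigmaE n hn x : ↥(Rn n)) : ℂ) = (starRingEnd ℂ) (x : ℂ) := rfl

lemma span_conj_eq (n : ℕ) (hn : 3 ≤ n) (q : ↥(Rn n))
    (huniq : ∀ J : Ideal ↥(Rn n),
      Cardinal.mk (↥(Rn n) ⧸ J) = Cardinal.mk (↥(Rn n) ⧸ Ideal.span {q}) →
        J = Ideal.span {q}) :
    Ideal.span {sigmaE n hn q} = Ideal.span {q} := by
  have hmap : Ideal.map ((sigmaE n hn : ↥(Rn n) →+* ↥(Rn n))) (Ideal.span {q})
      = Ideal.span {sigmaE n hn q} := by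
    rw [Ideal.map_span, Set.image_singleton]; rfl
  have e : (↥(Rn n) ⧸ Ideal.span {q}) ≃+* (↥(Rn n) ⧸ Ideal.span {sigmaE n hn q}) :=
    Ideal.quotientEquiv _ _ (sigmaE n hn) hmap.symm
  exact huniq _ (Cardinal.mk_congr e.toEquiv).symm

lemma conj_stable (n : ℕ) (hn : 3 ≤ n) (q : ↥(Rn n))
    (huniq : ∀ J : Ideal ↥(Rn n),
      Cardinal.mk (↥(Rn n) ⧸ J) = Cardinal.mk (↥(Rn n) ⧸ Ideal.span {q}) →
        J = Ideal.span {q})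
    {w : ↥(Rn n)} (hw : w ∈ Ideal.span {q}) : sigmaE n hn w ∈ Ideal.span {q} := by
  have h1 : sigmaE n hn w ∈ Ideal.map ((sigmaE n hn : ↥(Rn n) →+* ↥(Rn n))) (Ideal.span {q}) :=
    Ideal.mem_map_of_mem _ hw
  rw [Ideal.map_span, Set.image_singleton] at h1
  have h2 : Ideal.span {(sigmaE n hn : ↥(Rn n) →+* ↥(Rn n)) q} = Ideal.span {sigmaE n hn q} := rfl
  rw [h2, span_conj_eq n hn q huniq] at h1
  exact h1

lemma inIdeal_conj (n : ℕ) (hn : 3 ≤ n) (q : ↥(Rn n))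
    (huniq : ∀ J : Ideal ↥(Rn n),
      Cardinal.mk (↥(Rn n) ⧸ J) = Cardinal.mk (↥(Rn n) ⧸ Ideal.span {q}) →
        J = Ideal.span {q})
    {z : ℂ} (h : InIdeal n (Ideal.span {q}) z) :
    InIdeal n (Ideal.span {q}) ((starRingEnd ℂ) z) := by
  obtain ⟨w, hw, hwz⟩ := h
  exact ⟨sigmaE n hn w, conj_stable n hn q huniq hw, by rw [sigmaE_coe, hwz]⟩

lemma inIdeal_mul_unit (n : ℕ) (I : Ideal ↥(Rn n)) (a c : ↥(Rn n)) (hac : a * c = 1)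
    (z : ℂ) : InIdeal n I z ↔ InIdeal n I ((a : ℂ) * z) := by
  have hca : (c : ℂ) * (a : ℂ) = 1 := by
    have h := congrArg (Subtype.val) hac
    push_cast at h
    rw [mul_comm]; exact h
  constructor
  · rintro ⟨w, hw, rfl⟩
    exact ⟨a * w, I.mul_mem_left a hw, by push_cast; ring⟩
  · rintro ⟨w, hw, hwz⟩
    refine ⟨c * w, I.mul_mem_left c hw, ?_⟩
    push_cast
    rw [hwz, ← mul_assoc, hca, one_mul]


/-- if `qR` is the unique ideal of its index, then `conj q ∈ qR` and the
colouring induced by `qR` is perfect. -/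
theorem stmt5 (n : ℕ) (hn : 3 ≤ n) (hn2 : n % 4 ≠ 2) (q : ↥(Rn n)) (hq : q ≠ 0)
    (huniq : ∀ J : Ideal ↥(Rn n),
      Cardinal.mk (↥(Rn n) ⧸ J) = Cardinal.mk (↥(Rn n) ⧸ Ideal.span {q}) →
        J = Ideal.span {q}) :
    InIdeal n (Ideal.span {q}) ((starRingEnd ℂ) (q : ℂ)) ∧
    IsPerfectColouring n (Ideal.span {q}) := by
  have hconjq : InIdeal n (Ideal.span {q}) ((starRingEnd ℂ) (q : ℂ)) :=
    ⟨sigmaE n hn q, conj_stable n hn q huniq (Ideal.mem_span_singleton_self q), rfl⟩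
  refine ⟨hconjq, ?_⟩
  intro g hg himg x y hx hy
  obtain ⟨a, b, habs, hcase⟩ := hg
  have hb : b ∈ Rn n := by
    have h0 : g 0 ∈ (Rn n : Set ℂ) := by
      rw [← himg]; exact ⟨0, zero_mem _, rfl⟩
    rcases hcase with h | h
    · rw [h 0, mul_zero, zero_add] at h0; exact h0
    · rw [h 0, map_zero, mul_zero, zero_add] at h0; exact h0
  have ha : a ∈ Rn n := by
    have h1 : g 1 ∈ (Rn n : Set ℂ) := by
      rw [← himg]; exact ⟨1, one_mem _, rfl⟩
    rcases hcase with h | h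
    · rw [h 1, mul_one] at h1
      have h2 := sub_mem h1 hb; simpa using h2
    · rw [h 1, map_one, mul_one] at h1
      have h2 := sub_mem h1 hb; simpa using h2
  have hbp1 : b + 1 ∈ g '' (Rn n : Set ℂ) := by
    rw [himg]; exact add_mem hb (one_mem _)
  obtain ⟨u, hu, hgu⟩ := hbp1
  rcases hcase with h | h
  · have hau : a * u = 1 := by
      rw [h u] at hgu; linear_combination hgu
    have hd : g x - g y = a * (x - y) := by rw [h x, h y]; ring
    rw [hd]
    exact inIdeal_mul_unit n _ ⟨a, ha⟩ ⟨u, hu⟩ (Subtype.ext hau) (x - y)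
  · have hau : a * (starRingEnd ℂ) u = 1 := by
      rw [h u] at hgu; linear_combination hgu
    have hd : g x - g y = a * (starRingEnd ℂ) (x - y) := by
      rw [h x, h y, map_sub]; ring
    rw [hd]
    constructor
    · intro hz
      have h1 := inIdeal_conj n hn q huniq hz
      exact (inIdeal_mul_unit n _ ⟨a, ha⟩ ⟨_, conj_mem n hn hu⟩ (Subtype.ext hau) _).mp h1
    · intro hz
      have h1 := (inIdeal_mul_unit n _ ⟨a, ha⟩ ⟨_, conj_mem n hn hu⟩ (Subtype.ext hau) _).mpr hz
      have h2 := inIdeal_conj n hn q huniq h1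
      rwa [Complex.conj_conj] at h2
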